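/- Triangularity of the Gram matrix: assume q_1 < q_2 < ⋯ < q_N, and let M_{i,j} = -∮_{γ_{q_i}} (dξ/2πi) ξ^{y_j - j} · [∏_{ℓ=j+1}^{N}(q_ℓ - ξ) ∏_{ℓ=r+1}^{t}(1 + p_ℓ ξ)] / ∏_{ℓ=i}^{N}(q_ℓ - ξ), where γ_{q_i} is a small circle around q_i enclosing no other pole. Then M_{i,j} = 0 for i > j, and M_{i,i} = q_i^{y_i - i} ∏_{ℓ=r+1}^{t}(1 + p_ℓ q_i) ≠ 0; in particular M is upper-triangular and invertible. -/

import Mathlib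

open scoped BigOperators
open Metric

/-- triangularity of the Gram matrix.  Assume `q_1 < ⋯ < q_N` and let
`M_{i,j} = -(2πi)⁻¹ ∮_{γ_{q_i}} ξ^{y_j - j} ∏_{ℓ=j+1}^{N}(q_ℓ-ξ) ∏_{ℓ=r+1}^{t}(1+p_ℓ ξ)
             / ∏_{ℓ=i}^{N}(q_ℓ-ξ) dξ`,
where `γ_{q_i}` is a circle of radius `ε` around `q_i` enclosing no other pole.
Then `M_{i,j} = 0` for `i > j`, and
`M_{i,i} = q_i^{y_i - i} ∏_{ℓ=r+1}^{t}(1 + p_ℓ q_i) ≠ 0`. -/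
theorem stmt15 (N r t : ℕ) (q p : ℕ → ℝ)
    (hq : ∀ ℓ, 0 < q ℓ)
    (hqmono : ∀ a b, 1 ≤ a → a < b → b ≤ N → q a < q b)
    (hp : ∀ ℓ, 0 < p ℓ)
    (y : ℕ → ℤ) (i j : ℕ) (hi1 : 1 ≤ i) (hiN : i ≤ N) (hj1 : 1 ≤ j) (hjN : j ≤ N)
    (ε : ℝ) (hε : 0 < ε) (hε0 : ε < q i)
    (hεq : ∀ ℓ, 1 ≤ ℓ → ℓ ≤ N → ℓ ≠ i → ε < |q ℓ - q i|)
    (Mij : ℂ)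
    (hMij : Mij = -((2 * Real.pi * Complex.I)⁻¹ *
      ∮ ξ in C((q i : ℂ), ε),
        (ξ ^ (y j - (j : ℤ)) *
            (∏ ℓ ∈ Finset.Icc (j + 1) N, ((q ℓ : ℂ) - ξ)) *
            (∏ ℓ ∈ Finset.Icc (r + 1) t, (1 + (p ℓ : ℂ) * ξ))) /
          (∏ ℓ ∈ Finset.Icc i N, ((q ℓ : ℂ) - ξ)))) :
    (j < i → Mij = 0) ∧
    (i = j →
      Mij = (q i : ℂ) ^ (y i - (i : ℤ)) *
          ∏ ℓ ∈ Finset.Icc (r + 1) t, (1 + (p ℓ : ℂ) * (q i : ℂ)) ∧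
      Mij ≠ 0) := by
  have hεnn : (0:ℝ) ≤ ε := hε.le
  set c : ℂ := (q i : ℂ) with hcdef
  -- points of the closed ball are nonzero
  have hball0 : ∀ z ∈ closedBall c ε, z ≠ 0 := by
    intro z hz h0
    rw [mem_closedBall, h0, dist_comm, dist_zero_right] at hz
    rw [hcdef, Complex.norm_real, Real.norm_eq_abs, abs_of_pos (hq i)] at hz
    exact absurd (lt_of_lt_of_le hε0 hz) (lt_irrefl _)
  have hsph0 : ∀ z ∈ sphere c ε, z ≠ 0 := fun z hz =>
    hball0 z (sphere_subset_closedBall hz)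
  -- other poles are away from the sphere
  have hsphq : ∀ z ∈ sphere c ε, ∀ ℓ, 1 ≤ ℓ → ℓ ≤ N → ℓ ≠ i → ((q ℓ : ℂ) - z) ≠ 0 := by
    intro z hz ℓ h1 hN hℓi h0
    have hzq : z = (q ℓ : ℂ) := by linear_combination -h0
    rw [mem_sphere_iff_norm, hzq, hcdef] at hz
    rw [← Complex.ofReal_sub, Complex.norm_real, Real.norm_eq_abs] at hz
    exact absurd (hεq ℓ h1 hN hℓi) (by rw [← hz]; exact lt_irrefl _)
  have hsphi : ∀ z ∈ sphere c ε, ((q i : ℂ) - z) ≠ 0 := by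
    intro z hz h0
    have hzq : z = c := by rw [hcdef]; linear_combination -h0
    rw [mem_sphere_iff_norm, hzq, sub_self, norm_zero] at hz
    exact absurd hz.symm (ne_of_gt hε)
  -- differentiability helpers
  have hP : ∀ z : ℂ, DifferentiableAt ℂ
      (fun w => ∏ ℓ ∈ Finset.Icc (r + 1) t, (1 + (p ℓ : ℂ) * w)) z := fun z =>
    DifferentiableAt.fun_finsetProd fun ℓ _ =>
      (differentiableAt_const _).add ((differentiableAt_const _).mul differentiableAt_id)
  have hQ : ∀ (s : Finset ℕ) (z : ℂ), DifferentiableAt ℂ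
      (fun w => ∏ ℓ ∈ s, ((q ℓ : ℂ) - w)) z := fun s z =>
    DifferentiableAt.fun_finsetProd fun ℓ _ =>
      (differentiableAt_const _).sub differentiableAt_id
  constructor
  · -- case j < i
    intro hji
    obtain ⟨k, rfl⟩ : ∃ k, i = k + 1 := ⟨i - 1, (Nat.succ_pred_eq_of_pos hi1).symm⟩
    have hjk : j ≤ k := Nat.lt_succ_iff.mp hji
    have hkN : k ≤ N := le_trans (Nat.le_succ k) hiN
    set g : ℂ → ℂ := fun z => z ^ (y j - (j : ℤ)) *
        (∏ ℓ ∈ Finset.Ioc j k, ((q ℓ : ℂ) - z)) *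
        (∏ ℓ ∈ Finset.Icc (r + 1) t, (1 + (p ℓ : ℂ) * z)) with hgdef
    have hEq : Set.EqOn (fun ξ : ℂ =>
        (ξ ^ (y j - (j : ℤ)) *
            (∏ ℓ ∈ Finset.Icc (j + 1) N, ((q ℓ : ℂ) - ξ)) *
            (∏ ℓ ∈ Finset.Icc (r + 1) t, (1 + (p ℓ : ℂ) * ξ))) /
          (∏ ℓ ∈ Finset.Icc (k + 1) N, ((q ℓ : ℂ) - ξ))) g (sphere c ε) := by
      intro z hz
      have hD : (∏ ℓ ∈ Finset.Icc (k + 1) N, ((q ℓ : ℂ) - z)) ≠ 0 := by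
        rw [Finset.prod_ne_zero_iff]
        intro ℓ hℓ
        rw [Finset.mem_Icc] at hℓ
        rcases eq_or_ne ℓ (k + 1) with h | h
        · rw [h]; exact hsphi z hz
        · exact hsphq z hz ℓ (le_trans (Nat.one_le_iff_ne_zero.mpr (Nat.succ_ne_zero k)) hℓ.1)
            hℓ.2 h
      simp only [hgdef]
      rw [show Finset.Icc (j + 1) N = Finset.Ioc j N from Finset.Icc_add_one_left_eq_Ioc j N,
        ← Finset.prod_Ioc_consecutive _ hjk hkN,
        show Finset.Icc (k + 1) N = Finset.Ioc k N from Finset.Icc_add_one_left_eq_Ioc k N] 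
      rw [show Finset.Icc (k + 1) N = Finset.Ioc k N from Finset.Icc_add_one_left_eq_Ioc k N] at hD
      field_simp
    have hgdiff : ∀ z ∈ closedBall c ε, DifferentiableAt ℂ g z := by
      intro z hz
      exact ((differentiableAt_zpow.mpr (Or.inl (hball0 z hz))).mul (hQ _ z)).mul (hP z)
    have hzero : (∮ ξ in C(c, ε), g ξ) = 0 :=
      Complex.circleIntegral_eq_zero_of_differentiable_on_off_countable hεnn
        Set.countable_empty (fun z hz => (hgdiff z hz).continuousAt.continuousWithinAt)
        (fun z hz => hgdiff z (ball_subset_closedBall hz.1))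
    rw [hMij, circleIntegral.integral_congr hεnn hEq, hzero, mul_zero, neg_zero]
  · -- case i = j
    rintro rfl
    set P : ℂ → ℂ := fun z => ∏ ℓ ∈ Finset.Icc (r + 1) t, (1 + (p ℓ : ℂ) * z) with hPdef
    set h : ℂ → ℂ := fun z => -(z ^ (y i - (i : ℤ)) * P z) with hhdef
    have hiN' : i < N + 1 := Nat.lt_succ_of_le hiN
    have hEq : Set.EqOn (fun ξ : ℂ =>
        (ξ ^ (y i - (i : ℤ)) *
            (∏ ℓ ∈ Finset.Icc (i + 1) N, ((q ℓ : ℂ) - ξ)) *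
            (∏ ℓ ∈ Finset.Icc (r + 1) t, (1 + (p ℓ : ℂ) * ξ))) /
          (∏ ℓ ∈ Finset.Icc i N, ((q ℓ : ℂ) - ξ)))
        (fun z => (z - c)⁻¹ • h z) (sphere c ε) := by
      intro z hz
      have hE : (∏ ℓ ∈ Finset.Icc (i + 1) N, ((q ℓ : ℂ) - z)) ≠ 0 := by
        rw [Finset.prod_ne_zero_iff]
        intro ℓ hℓ
        rw [Finset.mem_Icc] at hℓ
        exact hsphq z hz ℓ (le_trans hi1 (le_trans (Nat.le_succ i) hℓ.1)) hℓ.2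
          (by omega)
      have hsplit : (∏ ℓ ∈ Finset.Icc i N, ((q ℓ : ℂ) - z)) =
          ((q i : ℂ) - z) * ∏ ℓ ∈ Finset.Icc (i + 1) N, ((q ℓ : ℂ) - z) := by
        rw [← Finset.Ico_add_one_right_eq_Icc, Finset.prod_eq_prod_Ico_succ_bot hiN', Finset.Ico_add_one_right_eq_Icc]
      have hqi : ((q i : ℂ) - z) ≠ 0 := hsphi z hz
      have hzc : z - c ≠ 0 := by
        rw [hcdef]; intro h0; exact hqi (by linear_combination -h0)
      simp only [hhdef, hPdef, smul_eq_mul, hsplit]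
      field_simp
      ring
    have hhdiff : ∀ z ∈ closedBall c ε, DifferentiableAt ℂ h z := by
      intro z hz
      exact ((differentiableAt_zpow.mpr (Or.inl (hball0 z hz))).mul (hP z)).neg
    have hdc : DiffContOnCl ℂ h (ball c ε) := by
      apply DifferentiableOn.diffContOnCl
      rw [closure_ball c hε.ne']
      exact fun z hz => (hhdiff z hz).differentiableWithinAt
    have hcball : c ∈ ball c ε := mem_ball_self hε
    have hcauchy : (∮ z in C(c, ε), (z - c)⁻¹ • h z) = (2 * Real.pi * Complex.I : ℂ) • h c :=
      hdc.circleIntegral_sub_inv_smul hcball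
    have h2pi : (2 * (Real.pi : ℂ) * Complex.I) ≠ 0 := Complex.two_pi_I_ne_zero
    have hval : Mij = -h c := by
      rw [hMij, circleIntegral.integral_congr hεnn hEq, hcauchy, smul_eq_mul,
        ← mul_assoc, inv_mul_cancel₀ h2pi, one_mul]
    have hPc : P c ≠ 0 := by
      rw [hPdef, Finset.prod_ne_zero_iff]
      intro ℓ _
      have : ((1 + p ℓ * q i : ℝ) : ℂ) ≠ 0 := by
        rw [Ne, Complex.ofReal_eq_zero]
        exact ne_of_gt (by nlinarith [mul_pos (hp ℓ) (hq i)])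
      simpa [hcdef] using this
    have hc0 : c ≠ 0 := by
      rw [hcdef, Ne, Complex.ofReal_eq_zero]; exact (hq i).ne'
    constructor
    · rw [hval, hhdef]; simp only [neg_neg]; rfl
    · rw [hval, hhdef, neg_neg]
      exact mul_ne_zero (zpow_ne_zero _ hc0) hPc
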